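/- arXiv:0710.3873 — 4 statements merged into one kernel-verified Lean document; each statement's English description precedes it below -/
import Mathlib

section
/- Let A be a metabelian Lie algebra and x, y nonzero elements of A. Then x and y form a pair of zero divisors if and only if xy = 0 and (a∘x)∘y = 0 for all a ∈ A. -/
/-- The (two-sided Lie) ideal of `A` generated by the single element `x`. -/
def lieIdealGen (k : Type*) [CommRing k] {A : Type*} [LieRing A] [LieAlgebra k A] (x : A) :
    LieIdeal k A :=
  LieSubmodule.lieSpan k A {x}

/-- Nonzero `x` and `y` form a pair of zero divisors: `⟨x⟩ ∘ ⟨y⟩ = 0`. -/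
def IsZeroDivPair (k : Type*) [CommRing k] {A : Type*} [LieRing A] [LieAlgebra k A]
    (x y : A) : Prop :=
  x ≠ 0 ∧ y ≠ 0 ∧ ∀ a ∈ lieIdealGen k x, ∀ b ∈ lieIdealGen k y, ⁅a, b⁆ = 0

/-- `x` is a zero divisor. -/
def IsLieZeroDivisor (k : Type*) [CommRing k] {A : Type*} [LieRing A] [LieAlgebra k A]
    (x : A) : Prop :=
  ∃ y, IsZeroDivPair k x y

/-- `D(A)`: all zero divisors of `A` together with `0`. -/
def DSet (k : Type*) [CommRing k] (A : Type*) [LieRing A] [LieAlgebra k A] : Set A :=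
  {x | x = 0 ∨ IsLieZeroDivisor k x}

/-- The Fitting radical: elements whose generated ideal is a nilpotent Lie algebra. -/
def FitSet (k : Type*) [CommRing k] (A : Type*) [LieRing A] [LieAlgebra k A] : Set A :=
  {x | LieRing.IsNilpotent (lieIdealGen k x)}

/-- The commutant (derived ideal) `A²`. -/
def commutant (k : Type*) [CommRing k] (A : Type*) [LieRing A] [LieAlgebra k A] : LieIdeal k A :=
  ⁅(⊤ : LieIdeal k A), (⊤ : LieIdeal k A)⁆

/-- A Lie ring is metabelian if `(a∘b)∘(c∘d) = 0` identically. -/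
def IsMetabelianLie (A : Type*) [LieRing A] : Prop :=
  ∀ a b c d : A, ⁅⁅a, b⁆, ⁅c, d⁆⁆ = 0

/-- The commutant `A²` is linear-torsion free: nonzero `x ∈ A²` times `y ∉ A²` is nonzero. -/
def LTFree (k : Type*) [CommRing k] (A : Type*) [LieRing A] [LieAlgebra k A] : Prop :=
  ∀ x ∈ commutant k A, x ≠ 0 → ∀ y ∉ commutant k A, ⁅x, y⁆ ≠ 0

/-- in a metabelian Lie algebra, nonzero x, y form a pair of zero divisors
iff xy = 0 and (a x) y = 0 for all a. -/
theorem isZeroDivPair_iff (k : Type*) [Field k] {A : Type*} [LieRing A] [LieAlgebra k A]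
    (hA : IsMetabelianLie A) {x y : A} (hx : x ≠ 0) (hy : y ≠ 0) :
    IsZeroDivPair k x y ↔ (⁅x, y⁆ = 0 ∧ ∀ a : A, ⁅⁅a, x⁆, y⁆ = 0) := by
  constructor
  · rintro ⟨-, -, h⟩
    have hxmem : x ∈ lieIdealGen k x :=
      LieSubmodule.subset_lieSpan (Set.mem_singleton x)
    have hymem : y ∈ lieIdealGen k y :=
      LieSubmodule.subset_lieSpan (Set.mem_singleton y)
    refine ⟨h x hxmem y hymem, fun a => h _ ((lieIdealGen k x).lie_mem hxmem) y hymem⟩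
  · rintro ⟨h1, h2⟩
    refine ⟨hx, hy, ?_⟩
    -- Step 1: ⁅x, v⁆ = 0 for all v ∈ ⟨y⟩.
    let S' : LieIdeal k A :=
      { carrier := {v | ⁅x, v⁆ = 0 ∧ ∀ a : A, ⁅x, ⁅a, v⁆⁆ = 0}
        add_mem' := by
          rintro u v ⟨hu1, hu2⟩ ⟨hv1, hv2⟩
          exact ⟨by rw [lie_add, hu1, hv1, add_zero],
            fun a => by rw [lie_add, lie_add, hu2 a, hv2 a, add_zero]⟩
        zero_mem' := ⟨lie_zero x, fun a => by rw [lie_zero, lie_zero]⟩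
        smul_mem' := by
          rintro c v ⟨hv1, hv2⟩
          exact ⟨by rw [lie_smul, hv1, smul_zero],
            fun a => by rw [lie_smul, lie_smul, hv2 a, smul_zero]⟩
        lie_mem := by
          rintro a v ⟨hv1, hv2⟩
          refine ⟨hv2 a, fun b => ?_⟩
          have hexp : ⁅b, ⁅a, v⁆⁆ = ⁅⁅b, a⁆, v⁆ + ⁅a, ⁅b, v⁆⁆ := (leibniz_lie b a v)
          rw [hexp, lie_add, hv2 ⁅b, a⁆, zero_add]
          rw [leibniz_lie x a ⁅b, v⁆, hA x a b v, hv2 b, lie_zero, add_zero] }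
    have hyS' : y ∈ S' := by
      refine ⟨h1, fun a => ?_⟩
      rw [leibniz_lie x a y, h1, lie_zero, add_zero, ← lie_skew x a, neg_lie, h2 a, neg_zero]
    have hstep1 : ∀ v ∈ lieIdealGen k y, ⁅x, v⁆ = 0 := by
      intro v hv
      have hle : lieIdealGen k y ≤ S' := LieSubmodule.lieSpan_le.mpr (by
        rintro z rfl; exact hyS')
      exact (hle hv).1
    -- Step 2: the centralizer of ⟨y⟩ is an ideal containing x.
    let S : LieIdeal k A :=
      { carrier := {u | ∀ v ∈ lieIdealGen k y, ⁅u, v⁆ = 0}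
        add_mem' := by
          intro u w hu hw v hv
          rw [add_lie, hu v hv, hw v hv, add_zero]
        zero_mem' := fun v _ => zero_lie v
        smul_mem' := by
          intro c u hu v hv
          rw [smul_lie, hu v hv, smul_zero]
        lie_mem := by
          intro a u hu v hv
          rw [lie_lie, hu v hv, hu ⁅a, v⁆ ((lieIdealGen k y).lie_mem hv), lie_zero,
            sub_zero] }
    have hxS : x ∈ S := hstep1
    intro a ha
    have hle : lieIdealGen k x ≤ S := LieSubmodule.lieSpan_le.mpr (by rintro z rfl; exact hxS)
    exact hle ha
end

section
/- A nonzero metabelian Lie algebra A has linear-torsion free commutant A² if and only if A is abelian or A is a strict semidomain. -/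
section Aux

variable {k : Type*} [CommRing k] {A : Type*} [LieRing A] [LieAlgebra k A]

/-- A `LieIdeal` built from a predicate. -/
def predIdeal (p : A → Prop) (h0 : p 0) (hadd : ∀ a b, p a → p b → p (a + b))
    (hsmul : ∀ (c : k) a, p a → p (c • a)) (hlie : ∀ (a : A) {w}, p w → p ⁅a, w⁆) :
    LieIdeal k A where
  carrier := {w | p w}
  add_mem' := fun {a b} ha hb => hadd a b ha hb
  zero_mem' := h0
  smul_mem' := fun c a ha => hsmul c a ha
  lie_mem := fun {x m} hm => hlie x hm

theorem mem_predIdeal {p : A → Prop} {h0 hadd hsmul hlie} {w : A} :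
    w ∈ predIdeal (k := k) p h0 hadd hsmul hlie ↔ p w := Iff.rfl

theorem bracket_mem_commutant (a b : A) : ⁅a, b⁆ ∈ commutant k A :=
  LieSubmodule.lie_mem_lie (LieSubmodule.mem_top a) (LieSubmodule.mem_top b)

theorem commutant_le {I : LieIdeal k A} (h : ∀ a b : A, ⁅a, b⁆ ∈ I) :
    commutant k A ≤ I := by
  rw [commutant, LieSubmodule.lieIdeal_oper_eq_span, LieSubmodule.lieSpan_le]
  rintro w ⟨x, n, rfl⟩
  exact h _ _

theorem mem_lieIdealGen_self (x : A) : x ∈ lieIdealGen k x :=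
  LieSubmodule.subset_lieSpan rfl

theorem lieIdealGen_le {x : A} {I : LieIdeal k A} (h : x ∈ I) : lieIdealGen k x ≤ I :=
  LieSubmodule.lieSpan_le.2 (by rintro w rfl; exact h)

/-- In a metabelian Lie algebra the commutant centralizes every bracket. -/
theorem commutant_le_bracketCentralizer (hA : IsMetabelianLie A) :
    ∀ v ∈ commutant k A, ∀ a b : A, ⁅⁅a, b⁆, v⁆ = 0 := by
  have : commutant k A ≤ predIdeal (k := k) (fun v => ∀ a b : A, ⁅⁅a, b⁆, v⁆ = 0)
      (by simp) (by intro u v hu hv a b; rw [lie_add, hu, hv, add_zero])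
      (by intro c u hu a b; rw [lie_smul, hu, smul_zero])
      (by
        intro c v hv a b
        have h1 : ⁅⁅a, b⁆, c⁆ = ⁅a, ⁅b, c⁆⁆ - ⁅b, ⁅a, c⁆⁆ := lie_lie a b c
        rw [leibniz_lie, hv a b, lie_zero, add_zero, h1, sub_lie, hv a ⁅b, c⁆, hv b ⁅a, c⁆,
          sub_zero]) := by
    apply commutant_le
    intro a b
    exact fun c d => hA c d a b
  exact fun v hv => this hv

/-- In a metabelian Lie algebra the commutant is abelian. -/
theorem commutant_abelian (hA : IsMetabelianLie A) :
    ∀ u ∈ commutant k A, ∀ v ∈ commutant k A, ⁅u, v⁆ = 0 := by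
  have : commutant k A ≤ predIdeal (k := k) (fun u => ∀ v ∈ commutant k A, ⁅u, v⁆ = 0)
      (by simp) (by intro a b ha hb v hv; rw [add_lie, ha v hv, hb v hv, add_zero])
      (by intro c a ha v hv; rw [smul_lie, ha v hv, smul_zero])
      (by
        intro c u hu v hv
        rw [lie_lie, hu v hv, hu ⁅c, v⁆ ((commutant k A).lie_mem hv), sub_zero, lie_zero]) := by
    apply commutant_le
    intro a b
    exact fun v hv => commutant_le_bracketCentralizer hA v hv a b
  exact fun u hu => this hu

end Aux

theorem ltfree_of (k : Type*) [CommRing k] {A : Type*} [LieRing A] [LieAlgebra k A]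
    (hA : IsMetabelianLie A)
    (h : (∀ x y : A, ⁅x, y⁆ = 0) ∨ DSet k A = (commutant k A : Set A)) : LTFree k A := by
  rcases h with h | hD
  · -- abelian: commutant is ⊥, so the condition is vacuous
    intro x hx hx0 y hy
    have : commutant k A ≤ ⊥ := commutant_le fun a b => by simp [h a b]
    exact absurd ((LieSubmodule.mem_bot (R := k) x).1 (this hx)) hx0
  · intro x hx hx0 y hy hxy
    -- derive that y is a zero divisor, contradicting y ∉ A² = D(A)
    have hy0 : y ≠ 0 := fun h0 => hy (h0 ▸ (commutant k A).zero_mem)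
    -- Step 1: ⟨x⟩ ⊆ {w ∈ A² | ⁅y,w⁆ = 0}
    have hS : lieIdealGen k x ≤ predIdeal (k := k)
        (fun w => w ∈ commutant k A ∧ ⁅y, w⁆ = 0)
        (by simp) 
        (by rintro a b ⟨ha, ha'⟩ ⟨hb, hb'⟩
            exact ⟨(commutant k A).add_mem ha hb, by rw [lie_add, ha', hb', add_zero]⟩)
        (by rintro c a ⟨ha, ha'⟩
            exact ⟨(commutant k A).smul_mem c ha, by rw [lie_smul, ha', smul_zero]⟩)
        (by rintro a w ⟨hw, hw'⟩
            refine ⟨(commutant k A).lie_mem hw, ?_⟩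
            rw [leibniz_lie, hw', lie_zero, add_zero]
            exact commutant_abelian hA _ (bracket_mem_commutant y a) _ hw) := by
      apply lieIdealGen_le
      exact ⟨hx, by rw [← lie_skew, hxy, neg_zero]⟩
    -- Step 2: ⟨y⟩ ⊆ centralizer of ⟨x⟩
    have hT : lieIdealGen k y ≤ predIdeal (k := k)
        (fun a => ∀ b ∈ lieIdealGen k x, ⁅a, b⁆ = 0)
        (by simp)
        (by intro a b ha hb w hw; rw [add_lie, ha w hw, hb w hw, add_zero])
        (by intro c a ha w hw; rw [smul_lie, ha w hw, smul_zero])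
        (by intro c a ha w hw
            rw [lie_lie, ha w hw, lie_zero, ha ⁅c, w⁆ ((lieIdealGen k x).lie_mem hw),
              sub_zero]) := by
      apply lieIdealGen_le
      exact fun b hb => (hS hb).2
    have : y ∈ DSet k A := Or.inr ⟨x, hy0, hx0, fun a ha b hb => hT ha b hb⟩
    rw [hD] at this
    exact hy this

/-- a nonzero metabelian Lie algebra has linear-torsion free commutant
iff it is abelian or a strict semidomain. -/
theorem ltfree_iff_abelian_or_strictSemidomain (k : Type*) [Field k] (A : Type*) [LieRing A]
    [LieAlgebra k A] [Nontrivial A] (hA : IsMetabelianLie A) :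
    LTFree k A ↔ (∀ x y : A, ⁅x, y⁆ = 0) ∨ DSet k A = (commutant k A : Set A) := by
  constructor
  · intro hLT
    by_cases hab : ∀ x y : A, ⁅x, y⁆ = 0
    · exact Or.inl hab
    · right
      push_neg at hab
      obtain ⟨a, b, hg⟩ := hab
      apply Set.eq_of_subset_of_subset
      · -- D(A) ⊆ A²
        rintro x (rfl | ⟨y, hx0, hy0, hpair⟩)
        · exact (commutant k A).zero_mem
        by_contra hx
        have hxy : ⁅x, y⁆ = 0 := hpair x (mem_lieIdealGen_self x) y (mem_lieIdealGen_self y)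
        by_cases hyc : y ∈ commutant k A
        · exact hLT y hyc hy0 x hx (by rw [← lie_skew, hxy, neg_zero])
        · have hc0 : ⁅⁅a, b⁆, x⁆ ≠ 0 := hLT ⁅a, b⁆ (bracket_mem_commutant a b) hg x hx
          have hcmem : ⁅⁅a, b⁆, x⁆ ∈ commutant k A := by
            rw [← lie_skew]
            exact (commutant k A).neg_mem
              (lie_mem_right k A (commutant k A) x ⁅a, b⁆ (bracket_mem_commutant a b))
          have hcx : ⁅⁅a, b⁆, x⁆ ∈ lieIdealGen k x :=
            lie_mem_right k A (lieIdealGen k x) ⁅a, b⁆ x (mem_lieIdealGen_self x)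
          exact hLT _ hcmem hc0 y hyc (hpair _ hcx y (mem_lieIdealGen_self y))
      · -- A² ⊆ D(A)
        intro x hx
        by_cases hx0 : x = 0
        · exact Or.inl hx0
        refine Or.inr ⟨x, hx0, hx0, fun u hu v hv => ?_⟩
        have hle : lieIdealGen k x ≤ commutant k A := lieIdealGen_le hx
        exact commutant_abelian hA u (hle hu) v (hle hv)
  · exact ltfree_of k hA
end

section
/- Let A be a metabelian Lie algebra whose commutant A² is linear-torsion free, X a basis of A/A², Y a nonempty set disjoint from X, and M₁ = A² ⊗_{k[X]} k[X ∪ Y]. Then M₁ is linear-torsion free as a k[X ∪ Y]-module: for every nonzero u ∈ M₁ and every nonzero linear polynomial f = Σ αᵢxᵢ + Σ βⱼyⱼ, one has u·f ≠ 0. -/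
/-- A polynomial is a nonzero linear form. -/
def IsLinearPoly {k : Type*} [CommSemiring k] {σ : Type*} (f : MvPolynomial σ k) : Prop :=
  ∃ c : σ →₀ k, c ≠ 0 ∧ f = c.sum fun i a => MvPolynomial.C a * MvPolynomial.X i

/-- k[X] embeds in k[X ∪ Y]. -/
noncomputable instance renameInlAlgebra (k : Type*) [CommSemiring k] (ι κ : Type*) :
    Algebra (MvPolynomial ι k) (MvPolynomial (ι ⊕ κ) k) :=
  (MvPolynomial.rename (Sum.inl : ι → ι ⊕ κ)).toRingHom.toAlgebra

namespace BaseChangeAux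

open MvPolynomial TensorProduct

variable (k : Type*) [Field k] (ι κ : Type*)

/-- `k[X ⊔ Y] ≃ (k[X])[Y]` as `k`-algebras. -/
noncomputable def psi : MvPolynomial (ι ⊕ κ) k ≃ₐ[k] MvPolynomial κ (MvPolynomial ι k) :=
  (renameEquiv k (Equiv.sumComm ι κ)).trans (sumAlgEquiv k κ ι)

variable {k ι κ}

lemma psi_X_inl (i : ι) : psi k ι κ (X (Sum.inl i)) = C (X i) := by
  simp [psi]

lemma psi_X_inr (j : κ) : psi k ι κ (X (Sum.inr j)) = X j := by
  simp [psi]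

lemma psi_rename_inl (g : MvPolynomial ι k) :
    psi k ι κ (rename Sum.inl g) = C g := by
  have h : ((psi k ι κ).toAlgHom.comp (rename (Sum.inl : ι → ι ⊕ κ))) =
      (IsScalarTower.toAlgHom k (MvPolynomial ι k) (MvPolynomial κ (MvPolynomial ι k))) := by
    apply MvPolynomial.algHom_ext
    intro i
    simp [psi_X_inl, MvPolynomial.algebraMap_eq]
  have := DFunLike.congr_fun h g
  simpa [MvPolynomial.algebraMap_eq] using this

lemma algebraMap_inl (g : MvPolynomial ι k) :
    algebraMap (MvPolynomial ι k) (MvPolynomial (ι ⊕ κ) k) g = rename Sum.inl g := rfl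

lemma smul_def' (g : MvPolynomial ι k) (p : MvPolynomial (ι ⊕ κ) k) :
    g • p = rename Sum.inl g * p := by
  rw [Algebra.smul_def, algebraMap_inl]

/-- `psi` as a `k[X]`-linear equivalence. -/
noncomputable def psiLinear :
    MvPolynomial (ι ⊕ κ) k ≃ₗ[MvPolynomial ι k] MvPolynomial κ (MvPolynomial ι k) where
  toFun := psi k ι κ
  invFun := (psi k ι κ).symm
  left_inv := (psi k ι κ).left_inv
  right_inv := (psi k ι κ).right_inv
  map_add' := map_add _
  map_smul' g p := by
    simp only [RingHom.id_apply, smul_def', map_mul, psi_rename_inl, smul_eq_C_mul]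

/-- The `k[X]`-linear "coefficient of the Y-monomial m" map. -/
noncomputable def coeffMap (m : κ →₀ ℕ) :
    MvPolynomial (ι ⊕ κ) k →ₗ[MvPolynomial ι k] MvPolynomial ι k where
  toFun p := coeff m (psi k ι κ p)
  map_add' p q := by simp
  map_smul' g p := by
    simp only [RingHom.id_apply, smul_def', map_mul, psi_rename_inl, coeff_C_mul, smul_eq_mul]

variable {N : Type*} [AddCommGroup N] [Module (MvPolynomial ι k) N]

/-- Coefficient of the tensor at a Y-monomial `m`. -/
noncomputable def phi (m : κ →₀ ℕ) :
    TensorProduct (MvPolynomial ι k) (MvPolynomial (ι ⊕ κ) k) N →ₗ[MvPolynomial ι k] N :=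
  TensorProduct.lift ((LinearMap.lsmul (MvPolynomial ι k) N).comp (coeffMap m))

lemma phi_tmul (m : κ →₀ ℕ) (p : MvPolynomial (ι ⊕ κ) k) (n : N) :
    phi m (p ⊗ₜ n) = coeff m (psi k ι κ p) • n := rfl

/-- The base-changed module as a direct sum of copies of `N` indexed by Y-monomials. -/
noncomputable def EE :
    TensorProduct (MvPolynomial ι k) (MvPolynomial (ι ⊕ κ) k) N
      ≃ₗ[MvPolynomial ι k] ((κ →₀ ℕ) →₀ N) :=
  letI := Classical.decEq (κ →₀ ℕ)
  (TensorProduct.congr (psiLinear ≪≫ₗ (basisMonomials κ (MvPolynomial ι k)).repr)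
      (LinearEquiv.refl _ N)) ≪≫ₗ finsuppScalarLeft _ N _

lemma EE_apply (u : TensorProduct (MvPolynomial ι k) (MvPolynomial (ι ⊕ κ) k) N)
    (m : κ →₀ ℕ) : EE u m = phi m u := by
  induction u using TensorProduct.induction_on with
  | zero => simp
  | tmul p n =>
      have hrepr : ((basisMonomials κ (MvPolynomial ι k)).repr (psi k ι κ p)) m
          = coeff m (psi k ι κ p) := rfl
      letI := Classical.decEq (κ →₀ ℕ)
      simp [EE, phi_tmul, TensorProduct.congr_tmul, finsuppScalarLeft_apply_tmul_apply, hrepr,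
        psiLinear]
      rfl
  | add x y hx hy => simp [map_add, hx, hy]

lemma exists_phi_ne_zero {u : TensorProduct (MvPolynomial ι k) (MvPolynomial (ι ⊕ κ) k) N}
    (hu : u ≠ 0) : ∃ m, phi m u ≠ 0 := by
  by_contra h
  push_neg at h
  apply hu
  have h0 : EE (N := N) u = 0 := by
    ext m; rw [EE_apply]; exact h m
  exact (LinearEquiv.map_eq_zero_iff _).mp h0

lemma rename_smul (g : MvPolynomial ι k)
    (u : TensorProduct (MvPolynomial ι k) (MvPolynomial (ι ⊕ κ) k) N) :
    (rename Sum.inl g : MvPolynomial (ι ⊕ κ) k) • u = g • u := by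
  induction u using TensorProduct.induction_on with
  | zero => simp
  | tmul p n =>
      rw [smul_tmul', smul_tmul']
      congr 1
  | add x y hx hy => simp [smul_add, hx, hy]

lemma phi_X_inr_smul_mem {m : κ →₀ ℕ} {j : κ} (h : j ∈ m.support)
    (u : TensorProduct (MvPolynomial ι k) (MvPolynomial (ι ⊕ κ) k) N) :
    phi m ((X (Sum.inr j) : MvPolynomial (ι ⊕ κ) k) • u) =
      phi (m - Finsupp.single j 1) u := by
  classical
  induction u using TensorProduct.induction_on with
  | zero => simp
  | tmul p n =>
      rw [smul_tmul', phi_tmul, phi_tmul]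
      have h1 : (X (Sum.inr j) : MvPolynomial (ι ⊕ κ) k) • p = X (Sum.inr j) * p := rfl
      rw [h1, map_mul, psi_X_inr, coeff_X_mul', if_pos h]
  | add x y hx hy =>
      rw [smul_add, map_add, hx, hy, map_add]

lemma phi_X_inr_smul_not_mem {m : κ →₀ ℕ} {j : κ} (h : j ∉ m.support)
    (u : TensorProduct (MvPolynomial ι k) (MvPolynomial (ι ⊕ κ) k) N) :
    phi m ((X (Sum.inr j) : MvPolynomial (ι ⊕ κ) k) • u) = 0 := by
  classical
  induction u using TensorProduct.induction_on with
  | zero => simp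
  | tmul p n =>
      rw [smul_tmul', phi_tmul]
      have h1 : (X (Sum.inr j) : MvPolynomial (ι ⊕ κ) k) • p = X (Sum.inr j) * p := rfl
      rw [h1, map_mul, psi_X_inr, coeff_X_mul', if_neg h, zero_smul]
  | add x y hx hy =>
      rw [smul_add, map_add, hx, hy, add_zero]

lemma degree_sub_single_add {n : κ →₀ ℕ} {j : κ} (h : j ∈ n.support) :
    Finsupp.degree (n - Finsupp.single j 1) + 1 = Finsupp.degree n := by
  have hle : Finsupp.single j 1 ≤ n :=
    Finsupp.single_le_iff.mpr (Nat.one_le_iff_ne_zero.mpr (Finsupp.mem_support_iff.mp h))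
  have h2 : (n - Finsupp.single j 1) + Finsupp.single j 1 = n := tsub_add_cancel_of_le hle
  have hds : Finsupp.degree (Finsupp.single j 1) = (1 : ℕ) := by
    simp [Finsupp.degree, Finsupp.support_single_ne_zero j one_ne_zero]
    exact Finsupp.degree_single j 1
  have hadd : ∀ a b : κ →₀ ℕ, Finsupp.degree (a + b) = Finsupp.degree a + Finsupp.degree b := by
    intro a b
    simp only [Finsupp.degree_eq_weight_one]
    exact map_add _ _ _
  conv_rhs => rw [← h2]
  rw [hadd, hds]

end BaseChangeAux

set_option maxHeartbeats 2000000 in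
/-- if the commutant A² of a metabelian Lie algebra A is linear-torsion
free as a module over k[X] (X a basis of A/A², variables acting by bracketing with
preimages), and Y is a nonempty set of fresh variables, then the base change
M₁ = A² ⊗_{k[X]} k[X ∪ Y] is linear-torsion free over k[X ∪ Y]. -/
theorem baseChange_ltfree (k : Type*) [Field k] {A : Type*} [LieRing A] [LieAlgebra k A]
    (hmet : IsMetabelianLie A)
    {ι κ : Type*} [Nonempty κ]
    (b : Module.Basis ι k (A ⧸ commutant k A)) (σ : ι → A)
    (hσ : ∀ i, LieSubmodule.Quotient.mk' (commutant k A) (σ i) = b i)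
    [Module (MvPolynomial ι k) ↥(commutant k A)]
    (hscal : ∀ (c : k) (m : ↥(commutant k A)),
      (MvPolynomial.C c : MvPolynomial ι k) • m = c • m)
    (hX : ∀ (i : ι) (m : ↥(commutant k A)),
      (((MvPolynomial.X i : MvPolynomial ι k) • m : ↥(commutant k A)) : A) = ⁅(m : A), σ i⁆)
    (hltf : ∀ m : ↥(commutant k A), m ≠ 0 →
      ∀ f : MvPolynomial ι k, IsLinearPoly f → f • m ≠ 0) :
    ∀ u : TensorProduct (MvPolynomial ι k) (MvPolynomial (ι ⊕ κ) k) ↥(commutant k A),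
      u ≠ 0 → ∀ f : MvPolynomial (ι ⊕ κ) k, IsLinearPoly f → f • u ≠ 0 := by
  classical
  intro u hu f hf hfu
  obtain ⟨c, hc, rfl⟩ := hf
  -- the coefficient family of `u`
  obtain ⟨F, hF⟩ : ∃ F : (κ →₀ ℕ) →₀ ↥(commutant k A),
      ∀ m, F m = BaseChangeAux.phi m u :=
    ⟨BaseChangeAux.EE u, fun m => BaseChangeAux.EE_apply u m⟩
  obtain ⟨mw, hmw⟩ := BaseChangeAux.exists_phi_ne_zero hu
  have hFw : F mw ≠ 0 := by rw [hF]; exact hmw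
  have hsupne : F.support.Nonempty := ⟨mw, Finsupp.mem_support_iff.mpr hFw⟩
  -- the coefficientwise relations coming from `f • u = 0`
  have hrel : ∀ m : κ →₀ ℕ,
      (∑ s ∈ c.support, (Sum.casesOn s
        (fun i => ((MvPolynomial.C (c (Sum.inl i)) * MvPolynomial.X i : MvPolynomial ι k) • F m))
        (fun j => if j ∈ m.support then
            (MvPolynomial.C (c (Sum.inr j)) : MvPolynomial ι k) • F (m - Finsupp.single j 1)
          else 0) : ↥(commutant k A))) = 0 := by
    intro m
    have h1 : BaseChangeAux.phi m
        ((c.sum fun s a => MvPolynomial.C a * MvPolynomial.X s) • u) = 0 := by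
      rw [hfu]; simp
    rw [Finsupp.sum, Finset.sum_smul, map_sum] at h1
    refine Eq.trans (Finset.sum_congr rfl ?_) h1
    rintro (i | j) hs
    · have h2 : (MvPolynomial.C (c (Sum.inl i)) * MvPolynomial.X (Sum.inl i) :
          MvPolynomial (ι ⊕ κ) k) • u
          = ((MvPolynomial.C (c (Sum.inl i)) * MvPolynomial.X i : MvPolynomial ι k)) • u := by
        rw [← BaseChangeAux.rename_smul]
        congr 1
        simp
      rw [h2, map_smul, hF]
    · have h2 : (MvPolynomial.C (c (Sum.inr j)) * MvPolynomial.X (Sum.inr j) :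
          MvPolynomial (ι ⊕ κ) k) • u
          = (MvPolynomial.C (c (Sum.inr j)) : MvPolynomial ι k) •
              ((MvPolynomial.X (Sum.inr j) : MvPolynomial (ι ⊕ κ) k) • u) := by
        rw [mul_smul, ← BaseChangeAux.rename_smul]
        congr 1
        simp
      rw [h2, map_smul]
      dsimp only
      by_cases hj : j ∈ m.support
      · rw [BaseChangeAux.phi_X_inr_smul_mem hj, if_pos hj, hF]
      · rw [BaseChangeAux.phi_X_inr_smul_not_mem hj, if_neg hj, smul_zero]
  -- degree bookkeeping
  set d : ℕ := F.support.sup Finsupp.degree with hd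
  obtain ⟨m₀, hm₀s, hm₀d⟩ := F.support.exists_mem_eq_sup hsupne Finsupp.degree
  have hFm₀ : F m₀ ≠ 0 := Finsupp.mem_support_iff.mp hm₀s
  have htop : ∀ m : κ →₀ ℕ, d < Finsupp.degree m → F m = 0 := by
    intro m hm
    by_contra h
    exact absurd (Finset.le_sup (Finsupp.mem_support_iff.mpr h)) (not_le.mpr hm)
  by_cases hcr : ∀ j : κ, c (Sum.inr j) = 0
  · -- Case A: the linear form has no Y-part
    obtain ⟨s0, hs0⟩ := Finsupp.ne_iff.mp hc
    have hs0' : c s0 ≠ 0 := by simpa using hs0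
    set clF : ι →₀ k := c.comapDomain Sum.inl Sum.inl_injective.injOn with hclFdef
    have hclF : clF ≠ 0 := by
      cases s0 with
      | inl i =>
          intro h0
          apply hs0'
          have h1 := DFunLike.congr_fun h0 i
          rw [hclFdef, Finsupp.comapDomain_apply] at h1
          simpa using h1
      | inr j => exact absurd (hcr j) hs0'
    have hgl : (∑ i ∈ clF.support,
        (MvPolynomial.C (clF i) * MvPolynomial.X i : MvPolynomial ι k)) • F m₀ ≠ 0 := by
      have islin : IsLinearPoly (clF.sum fun i a => MvPolynomial.C a * MvPolynomial.X i) :=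
        ⟨clF, hclF, rfl⟩
      have := hltf (F m₀) hFm₀ _ islin
      simpa [Finsupp.sum] using this
    apply hgl
    rw [Finset.sum_smul]
    have hvan : ∀ s ∈ c.support, s ∉ Set.range (Sum.inl : ι → ι ⊕ κ) →
        (Sum.casesOn s
          (fun i => ((MvPolynomial.C (c (Sum.inl i)) * MvPolynomial.X i : MvPolynomial ι k)
            • F m₀))
          (fun j => if j ∈ m₀.support then
              (MvPolynomial.C (c (Sum.inr j)) : MvPolynomial ι k) • F (m₀ - Finsupp.single j 1)
            else 0) : ↥(commutant k A)) = 0 := by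
      rintro (i | j) hs hrange
      · exact absurd ⟨i, rfl⟩ hrange
      · exact absurd (hcr j) (Finsupp.mem_support_iff.mp hs)
    have hpre := Finset.sum_preimage (Sum.inl : ι → ι ⊕ κ) c.support
      Sum.inl_injective.injOn
      (fun s => (Sum.casesOn s
          (fun i => ((MvPolynomial.C (c (Sum.inl i)) * MvPolynomial.X i : MvPolynomial ι k)
            • F m₀))
          (fun j => if j ∈ m₀.support then
              (MvPolynomial.C (c (Sum.inr j)) : MvPolynomial ι k) • F (m₀ - Finsupp.single j 1)
            else 0) : ↥(commutant k A))) hvan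
    exact hpre.trans (hrel m₀)
  · -- Case B: the linear form has a nontrivial Y-part
    push_neg at hcr
    obtain ⟨j₀, hj₀⟩ := hcr
    have hnall : ¬ ∀ lam : Module.Dual k ↥(commutant k A), lam (F m₀) = 0 := by
      rw [Module.forall_dual_apply_eq_zero_iff]
      exact hFm₀
    obtain ⟨lam, hlam⟩ := not_forall.mp hnall
    obtain ⟨crF, hcrFdef⟩ : ∃ crF : κ →₀ k,
        crF = c.comapDomain Sum.inr Sum.inr_injective.injOn := ⟨_, rfl⟩
    have hcrF_apply : ∀ j, crF j = c (Sum.inr j) := by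
      intro j; rw [hcrFdef, Finsupp.comapDomain_apply]
    obtain ⟨h', hh'def⟩ : ∃ h' : MvPolynomial κ k,
        h' = ∑ j ∈ crF.support, MvPolynomial.C (crF j) * MvPolynomial.X j := ⟨_, rfl⟩
    obtain ⟨q, hqdef⟩ : ∃ q : MvPolynomial κ k,
        q = ∑ m ∈ F.support.filter (fun m => Finsupp.degree m = d),
          MvPolynomial.monomial m (lam (F m)) := ⟨_, rfl⟩
    have hqcoeff : ∀ n, MvPolynomial.coeff n q =
        if Finsupp.degree n = d then lam (F n) else 0 := by
      intro n
      rw [hqdef, MvPolynomial.coeff_sum]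
      simp only [MvPolynomial.coeff_monomial]
      rw [Finset.sum_ite_eq' (F.support.filter fun m => Finsupp.degree m = d) n
        (fun m => lam (F m))]
      by_cases h1 : Finsupp.degree n = d
      · by_cases h2 : n ∈ F.support
        · simp [Finset.mem_filter, h1, h2]
        · simp [Finset.mem_filter, h1, h2, Finsupp.notMem_support_iff.mp h2]
      · simp [Finset.mem_filter, h1]
    have hq0 : MvPolynomial.coeff m₀ q ≠ 0 := by
      rw [hqcoeff, if_pos hm₀d.symm]
      exact hlam
    have hh'0 : h' ≠ 0 := by
      intro h0
      have hcoe : MvPolynomial.coeff (Finsupp.single j₀ 1) h' = crF j₀ := by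
        rw [hh'def, MvPolynomial.coeff_sum]
        have hterm : ∀ j ∈ crF.support,
            MvPolynomial.coeff (Finsupp.single j₀ 1)
              (MvPolynomial.C (crF j) * MvPolynomial.X j)
            = if j = j₀ then crF j else 0 := by
          intro j _
          rw [MvPolynomial.coeff_C_mul, MvPolynomial.coeff_X']
          by_cases hjj : j = j₀
          · simp [hjj]
          · rw [if_neg (fun hcon => hjj ((Finsupp.single_left_inj one_ne_zero).mp hcon)),
              if_neg hjj, mul_zero]
        rw [Finset.sum_congr rfl hterm, Finset.sum_ite_eq' crF.support j₀ (fun j => crF j)]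
        by_cases hj : j₀ ∈ crF.support
        · rw [if_pos hj]
        · rw [if_neg hj]
          exact (Finsupp.notMem_support_iff.mp hj).symm
      rw [h0, MvPolynomial.coeff_zero, hcrF_apply] at hcoe
      exact hj₀ hcoe.symm
    have hmul : h' * q = 0 := by
      apply MvPolynomial.ext
      intro n
      rw [MvPolynomial.coeff_zero, hh'def, Finset.sum_mul, MvPolynomial.coeff_sum]
      have hterm : ∀ j, MvPolynomial.coeff n (MvPolynomial.C (crF j) * MvPolynomial.X j * q)
          = crF j * (if j ∈ n.support then
              MvPolynomial.coeff (n - Finsupp.single j 1) q else 0) := by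
        intro j
        rw [mul_assoc, mul_comm (MvPolynomial.X j) q, MvPolynomial.coeff_C_mul,
          MvPolynomial.coeff_mul_X']
      by_cases hdn : Finsupp.degree n = d + 1
      · have hFn : F n = 0 := htop n (by rw [hdn]; exact Nat.lt_succ_self d)
        have hterm2 : ∀ j ∈ crF.support,
            MvPolynomial.coeff n (MvPolynomial.C (crF j) * MvPolynomial.X j * q)
            = lam ((Sum.casesOn (Sum.inr j : ι ⊕ κ)
                (fun i => ((MvPolynomial.C (c (Sum.inl i)) * MvPolynomial.X i :
                    MvPolynomial ι k) • F n))
                (fun j => if j ∈ n.support then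
                    (MvPolynomial.C (c (Sum.inr j)) : MvPolynomial ι k) •
                      F (n - Finsupp.single j 1)
                  else 0) : ↥(commutant k A))) := by
          intro j _
          rw [hterm]
          dsimp only
          by_cases hjn : j ∈ n.support
          · rw [if_pos hjn, if_pos hjn, hqcoeff]
            have hdeg : Finsupp.degree (n - Finsupp.single j 1) = d := by
              have := BaseChangeAux.degree_sub_single_add hjn
              omega
            rw [if_pos hdeg, hscal, map_smul, smul_eq_mul, hcrF_apply]
          · rw [if_neg hjn, if_neg hjn, mul_zero, map_zero]
        rw [Finset.sum_congr rfl hterm2]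
        have hvan : ∀ s ∈ c.support, s ∉ Set.range (Sum.inr : κ → ι ⊕ κ) →
            lam ((Sum.casesOn s
              (fun i => ((MvPolynomial.C (c (Sum.inl i)) * MvPolynomial.X i :
                  MvPolynomial ι k) • F n))
              (fun j => if j ∈ n.support then
                  (MvPolynomial.C (c (Sum.inr j)) : MvPolynomial ι k) •
                    F (n - Finsupp.single j 1)
                else 0) : ↥(commutant k A))) = 0 := by
          rintro (i | j) hs hrange
          · show lam _ = 0
            dsimp only
            rw [hFn, smul_zero, map_zero]
          · exact absurd ⟨j, rfl⟩ hrange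
        have hpre := Finset.sum_preimage (Sum.inr : κ → ι ⊕ κ) c.support
          Sum.inr_injective.injOn
          (fun s => lam ((Sum.casesOn s
              (fun i => ((MvPolynomial.C (c (Sum.inl i)) * MvPolynomial.X i :
                  MvPolynomial ι k) • F n))
              (fun j => if j ∈ n.support then
                  (MvPolynomial.C (c (Sum.inr j)) : MvPolynomial ι k) •
                    F (n - Finsupp.single j 1)
                else 0) : ↥(commutant k A)))) hvan
        have hsupp2 : crF.support = c.support.preimage Sum.inr Sum.inr_injective.injOn := by
          rw [hcrFdef]; rfl
        rw [hsupp2]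
        refine hpre.trans ?_
        rw [← map_sum, hrel n, map_zero]
      · apply Finset.sum_eq_zero
        intro j hj
        rw [hterm]
        by_cases hjn : j ∈ n.support
        · rw [if_pos hjn, hqcoeff]
          have hne : Finsupp.degree (n - Finsupp.single j 1) ≠ d := by
            have := BaseChangeAux.degree_sub_single_add hjn
            omega
          rw [if_neg hne, mul_zero]
        · rw [if_neg hjn, mul_zero]
    rcases mul_eq_zero.mp hmul with h0 | h0
    · exact hh'0 h0
    · exact hq0 (by rw [h0, MvPolynomial.coeff_zero])
end

section
/- Let A be a nonabelian metabelian Lie algebra whose commutant A² is linear-torsion free. If x, y is a pair of zero divisors in A, then both x ∈ A² and y ∈ A². -/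
lemma lie_mem_commutant (k : Type*) [CommRing k] {A : Type*} [LieRing A] [LieAlgebra k A]
    (a b : A) : ⁅a, b⁆ ∈ commutant k A :=
  LieSubmodule.lie_mem_lie (LieSubmodule.mem_top a) (LieSubmodule.mem_top b)

/-- Key half: if `y ∉ A²` then contradiction. -/
lemma key (k : Type*) [Field k] {A : Type*} [LieRing A] [LieAlgebra k A]
    (hnab : ¬ ∀ x y : A, ⁅x, y⁆ = 0) (hltf : LTFree k A)
    {x y : A} (hx : x ≠ 0) (hxy0 : ⁅x, y⁆ = 0)
    (hz : ∀ a : A, ⁅⁅a, x⁆, y⁆ = 0) : y ∈ commutant k A := by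
  by_contra hy
  -- x is central
  have hcent : ∀ a : A, ⁅a, x⁆ = 0 := by
    intro a
    by_contra h
    exact hltf ⁅a, x⁆ (lie_mem_commutant k a x) h y hy (hz a)
  by_cases hxc : x ∈ commutant k A
  · exact hltf x hxc hx y hy hxy0
  · push_neg at hnab
    obtain ⟨u, v, huv⟩ := hnab
    exact hltf ⁅u, v⁆ (lie_mem_commutant k u v) huv x hxc (hcent ⁅u, v⁆)

/-- in a nonabelian metabelian Lie algebra with linear-torsion free
commutant, every pair of zero divisors lies in the commutant. -/
theorem zeroDivPair_mem_commutant (k : Type*) [Field k] {A : Type*} [LieRing A]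
    [LieAlgebra k A] (hmet : IsMetabelianLie A)
    (hnab : ¬ ∀ x y : A, ⁅x, y⁆ = 0) (hltf : LTFree k A)
    {x y : A} (hxy : IsZeroDivPair k x y) :
    x ∈ commutant k A ∧ y ∈ commutant k A := by
  obtain ⟨hx, hy, hz⟩ := hxy
  have hmx : x ∈ lieIdealGen k x := LieSubmodule.subset_lieSpan rfl
  have hmy : y ∈ lieIdealGen k y := LieSubmodule.subset_lieSpan rfl
  have hxy0 : ⁅x, y⁆ = 0 := hz x hmx y hmy
  constructor
  · refine key k hnab hltf hy (by rw [← lie_skew, hxy0]; simp) fun a => ?_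
    rw [← lie_skew]
    rw [hz x hmx ⁅a, y⁆ ((lieIdealGen k y).lie_mem hmy)]
    simp
  · exact key k hnab hltf hx hxy0 fun a => hz ⁅a, x⁆ ((lieIdealGen k x).lie_mem hmx) y hmy
end
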